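/- arXiv:1101.1132 — 2 statements merged into one kernel-verified Lean document; each statement's English description precedes it below -/
import Mathlib

section
/- For every integer n ≥ 0, ∫₀¹ xⁿ E'(x) dx = (π/(2(n+1))) · Γ((n+3)/2)² / (Γ((n+2)/2)·Γ((n+4)/2)). -/
open Real intervalIntegral

noncomputable def ellK (x : ℝ) : ℝ := ∫ θ in (0:ℝ)..(π/2), 1 / Real.sqrt (1 - x^2 * Real.sin θ ^ 2)

noncomputable def ellE (x : ℝ) : ℝ := ∫ θ in (0:ℝ)..(π/2), Real.sqrt (1 - x^2 * Real.sin θ ^ 2)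

noncomputable def ellK' (x : ℝ) : ℝ := ellK (Real.sqrt (1 - x^2))

noncomputable def ellE' (x : ℝ) : ℝ := ellE (Real.sqrt (1 - x^2))

open MeasureTheory Set

section Aux

lemma image_Ioo_mono {f : ℝ → ℝ} {a b : ℝ} (hab : a ≤ b)
    (hmono : StrictMonoOn f (Icc a b)) (hcont : ContinuousOn f (Icc a b)) :
    f '' Ioo a b = Ioo (f a) (f b) := by
  apply Subset.antisymm
  · rintro _ ⟨t, ht, rfl⟩
    exact ⟨hmono (left_mem_Icc.2 hab) (Ioo_subset_Icc_self ht) ht.1,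
      hmono (Ioo_subset_Icc_self ht) (right_mem_Icc.2 hab) ht.2⟩
  · exact intermediate_value_Ioo hab hcont

noncomputable def Wal (n : ℕ) : ℝ := ∫ t in (0:ℝ)..(π/2), sin t ^ n

lemma Wal_rec (n : ℕ) : Wal (n+2) = (n+1)/(n+2) * Wal n := by
  rw [Wal, integral_sin_pow]
  simp [Wal]

lemma cos_pow_integral (n : ℕ) : (∫ u in (0:ℝ)..(π/2), cos u ^ n) = Wal n := by
  induction n using Nat.strong_induction_on with
  | _ n ih =>
    match n with
    | 0 => simp [Wal]
    | 1 => simp [Wal]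
    | (m+2) =>
      rw [integral_cos_pow, Wal_rec, ih m (by omega)]
      simp

noncomputable def Wn (n : ℕ) : ℝ := ∫ t in Ioo (0:ℝ) (π/2), sin t ^ n

lemma Wn_eq_Wal (n : ℕ) : Wn n = Wal n := by
  rw [Wal, intervalIntegral.integral_of_le (by positivity), integral_Ioc_eq_integral_Ioo, Wn]

lemma inner_x (n : ℕ) {c : ℝ} (hc : 0 < c) :
    (∫ x in Ioo (0:ℝ) c, x ^ n / Real.sqrt (c^2 - x^2)) = c ^ n * Wn n := by
  have hsub : ∀ t ∈ Icc (0:ℝ) (π/2), HasDerivWithinAt (fun t => c * Real.sin t)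
      (c * Real.cos t) (Icc 0 (π/2)) t := fun t _ =>
    ((Real.hasDerivAt_sin t).const_mul c).hasDerivWithinAt
  have hmono : StrictMonoOn (fun t => c * Real.sin t) (Icc (0:ℝ) (π/2)) := by
    intro s hs t ht hst
    have := Real.strictMonoOn_sin (Icc_subset_Icc (by linarith [pi_pos]) le_rfl hs)
      (Icc_subset_Icc (by linarith [pi_pos]) le_rfl ht) hst
    exact mul_lt_mul_of_pos_left this hc
  have hcont : ContinuousOn (fun t => c * Real.sin t) (Icc (0:ℝ) (π/2)) :=
    (continuous_const.mul Real.continuous_sin).continuousOn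
  have himg : (fun t => c * Real.sin t) '' Ioo 0 (π/2) = Ioo 0 c := by
    rw [image_Ioo_mono (by positivity) hmono hcont]
    simp
  rw [← himg, integral_image_eq_integral_abs_deriv_smul measurableSet_Ioo
    (fun t ht => (hsub t (Ioo_subset_Icc_self ht)).mono Ioo_subset_Icc_self)
    (hmono.injOn.mono Ioo_subset_Icc_self) (fun x => x ^ n / Real.sqrt (c^2 - x^2))]
  rw [Wn, ← MeasureTheory.integral_const_mul]
  apply setIntegral_congr_fun measurableSet_Ioo
  intro t ht
  have hcos : 0 < Real.cos t := Real.cos_pos_of_mem_Ioo ⟨by linarith [ht.1, pi_pos], ht.2⟩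
  have hsin : 0 < Real.sin t := Real.sin_pos_of_pos_of_lt_pi ht.1 (by linarith [ht.2, pi_pos])
  have h1 : c^2 - (c * Real.sin t)^2 = (c * Real.cos t)^2 := by
    have := Real.sin_sq_add_cos_sq t; nlinarith
  have h2 : Real.sqrt (c^2 - (c * Real.sin t)^2) = c * Real.cos t := by
    rw [h1, Real.sqrt_sq (by positivity)]
  simp only [smul_eq_mul]
  rw [abs_of_pos (by positivity), h2, mul_pow]
  field_simp

lemma integrableOn_inner_x (n : ℕ) {c : ℝ} (hc : 0 < c) :
    IntegrableOn (fun x => x ^ n / Real.sqrt (c^2 - x^2)) (Ioo (0:ℝ) c) := by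
  have hsub : ∀ t ∈ Icc (0:ℝ) (π/2), HasDerivWithinAt (fun t => c * Real.sin t)
      (c * Real.cos t) (Icc 0 (π/2)) t := fun t _ =>
    ((Real.hasDerivAt_sin t).const_mul c).hasDerivWithinAt
  have hmono : StrictMonoOn (fun t => c * Real.sin t) (Icc (0:ℝ) (π/2)) := by
    intro s hs t ht hst
    have := Real.strictMonoOn_sin (Icc_subset_Icc (by linarith [pi_pos]) le_rfl hs)
      (Icc_subset_Icc (by linarith [pi_pos]) le_rfl ht) hst
    exact mul_lt_mul_of_pos_left this hc
  have hcont : ContinuousOn (fun t => c * Real.sin t) (Icc (0:ℝ) (π/2)) :=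
    (continuous_const.mul Real.continuous_sin).continuousOn
  have himg : (fun t => c * Real.sin t) '' Ioo 0 (π/2) = Ioo 0 c := by
    rw [image_Ioo_mono (by positivity) hmono hcont]
    simp
  rw [← himg, integrableOn_image_iff_integrableOn_abs_deriv_smul measurableSet_Ioo
    (fun t ht => (hsub t (Ioo_subset_Icc_self ht)).mono Ioo_subset_Icc_self)
    (hmono.injOn.mono Ioo_subset_Icc_self)]
  apply MeasureTheory.IntegrableOn.congr_fun
    (f := fun t => c ^ n * Real.sin t ^ n)
  · exact (continuous_const.mul (Real.continuous_sin.pow n)).integrableOn_Icc.mono_set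
      Ioo_subset_Icc_self
  · intro t ht
    have hcos : 0 < Real.cos t := Real.cos_pos_of_mem_Ioo ⟨by linarith [ht.1, pi_pos], ht.2⟩
    have hsin : 0 < Real.sin t := Real.sin_pos_of_pos_of_lt_pi ht.1 (by linarith [ht.2, pi_pos])
    have h1 : c^2 - (c * Real.sin t)^2 = (c * Real.cos t)^2 := by
      have := Real.sin_sq_add_cos_sq t; nlinarith
    have h2 : Real.sqrt (c^2 - (c * Real.sin t)^2) = c * Real.cos t := by
      rw [h1, Real.sqrt_sq (by positivity)]
    simp only [smul_eq_mul]
    rw [abs_of_pos (by positivity), h2, mul_pow]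
    field_simp
  · exact measurableSet_Ioo

lemma theta_sub {x : ℝ} (hx0 : 0 < x) (hx1 : x < 1) :
    (∫ u in Ioo (0:ℝ) (Real.arccos x), Real.cos u ^ 2 / Real.sqrt (Real.cos u ^ 2 - x^2))
      = ∫ θ in Ioo (0:ℝ) (π/2), Real.sqrt (1 - (1 - x^2) * Real.sin θ ^ 2) := by
  set k := Real.sqrt (1 - x^2) with hk
  have hx2 : 0 < 1 - x^2 := by nlinarith
  have hk0 : 0 < k := Real.sqrt_pos.2 hx2
  have hk2 : k^2 = 1 - x^2 := Real.sq_sqrt hx2.le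
  have hk1 : k < 1 := by nlinarith
  set f : ℝ → ℝ := fun θ => Real.arcsin (k * Real.sin θ) with hf
  set f' : ℝ → ℝ := fun θ => 1 / Real.sqrt (1 - (k * Real.sin θ)^2) * (k * Real.cos θ) with hf'
  have hbound : ∀ θ : ℝ, |k * Real.sin θ| ≤ k := by
    intro θ
    rw [abs_mul, abs_of_pos hk0]
    nlinarith [Real.abs_sin_le_one θ, abs_nonneg (Real.sin θ)]
  have hder : ∀ θ : ℝ, HasDerivAt f (f' θ) θ := by
    intro θ
    have h1 : k * Real.sin θ ≠ -1 := by
      intro h; have := hbound θ; rw [h] at this; simp at this; linarith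
    have h2 : k * Real.sin θ ≠ 1 := by
      intro h; have := hbound θ; rw [h] at this; simp at this; linarith
    have := (Real.hasDerivAt_arcsin h1 h2).comp θ ((Real.hasDerivAt_sin θ).const_mul k)
    simpa [hf, hf', mul_comm, Function.comp_def] using this
  have hmono : StrictMonoOn f (Icc (0:ℝ) (π/2)) := by
    intro s hs t ht hst
    have hs' : Real.sin s < Real.sin t := Real.strictMonoOn_sin
      (Icc_subset_Icc (by linarith [pi_pos]) le_rfl hs)
      (Icc_subset_Icc (by linarith [pi_pos]) le_rfl ht) hst
    have : k * Real.sin s < k * Real.sin t := mul_lt_mul_of_pos_left hs' hk0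
    exact Real.strictMonoOn_arcsin
      ⟨by linarith [abs_le.1 (hbound s)], by linarith [abs_le.1 (hbound s)]⟩
      ⟨by linarith [abs_le.1 (hbound t)], by linarith [abs_le.1 (hbound t)]⟩ this
  have hcont : ContinuousOn f (Icc (0:ℝ) (π/2)) :=
    (Real.continuous_arcsin.comp (continuous_const.mul Real.continuous_sin)).continuousOn
  have harck : Real.arcsin k = Real.arccos x := by
    rw [show k = Real.sin (Real.arccos x) from (Real.sin_arccos x).symm]
    exact Real.arcsin_sin (by linarith [Real.arccos_nonneg x, pi_pos])
      (Real.arccos_le_pi_div_two.2 hx0.le)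
  have himg : f '' Ioo 0 (π/2) = Ioo 0 (Real.arccos x) := by
    rw [image_Ioo_mono (by positivity) hmono hcont]
    simp [hf, harck]
  rw [← himg, integral_image_eq_integral_abs_deriv_smul measurableSet_Ioo
    (fun θ _ => (hder θ).hasDerivWithinAt)
    (hmono.injOn.mono Ioo_subset_Icc_self)
    (fun u => Real.cos u ^ 2 / Real.sqrt (Real.cos u ^ 2 - x^2))]
  apply setIntegral_congr_fun measurableSet_Ioo
  intro θ hθ
  have hcos : 0 < Real.cos θ := Real.cos_pos_of_mem_Ioo ⟨by linarith [hθ.1, pi_pos], hθ.2⟩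
  have hsin : 0 < Real.sin θ := Real.sin_pos_of_pos_of_lt_pi hθ.1 (by linarith [hθ.2, pi_pos])
  have hsc := Real.sin_sq_add_cos_sq θ
  have hA : 0 < 1 - (k * Real.sin θ)^2 := by
    nlinarith [hbound θ, abs_nonneg (k * Real.sin θ), sq_abs (k * Real.sin θ)]
  have hcosf : Real.cos (f θ) ^ 2 = 1 - (k * Real.sin θ)^2 := by
    rw [hf]; simp only []
    rw [Real.cos_arcsin, Real.sq_sqrt hA.le]
  have hden : Real.cos (f θ) ^ 2 - x^2 = (k * Real.cos θ)^2 := by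
    rw [hcosf]; nlinarith
  have hsq : Real.sqrt ((k * Real.cos θ)^2) = k * Real.cos θ :=
    Real.sqrt_sq (by positivity)
  simp only [smul_eq_mul]
  rw [hden, hsq, hcosf]
  rw [abs_of_pos (by positivity)]
  have h1x : 1 - (1 - x^2) * Real.sin θ ^ 2 = 1 - (k * Real.sin θ)^2 := by
    rw [← hk2]; ring
  rw [h1x]
  have hsA : 0 < Real.sqrt (1 - (k * Real.sin θ)^2) := Real.sqrt_pos.2 hA
  have hm := Real.mul_self_sqrt hA.le
  show 1 / Real.sqrt (1 - (k * Real.sin θ)^2) * (k * Real.cos θ)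
      * ((1 - (k * Real.sin θ)^2) / (k * Real.cos θ)) = _
  have hkc : k * Real.cos θ ≠ 0 := by positivity
  set A := 1 - (k * Real.sin θ)^2 with hA'
  set s := Real.sqrt A with hs
  have hs0 : s ≠ 0 := hsA.ne'
  field_simp
  rw [← hm]; ring

def Sset : Set (ℝ × ℝ) := {p | 0 < p.1 ∧ 0 < p.2 ∧ p.2 < π / 2 ∧ p.1 < Real.cos p.2}

lemma Sset_open : IsOpen Sset := by
  have h1 : IsOpen {p : ℝ × ℝ | 0 < p.1} := isOpen_lt continuous_const continuous_fst
  have h2 : IsOpen {p : ℝ × ℝ | 0 < p.2} := isOpen_lt continuous_const continuous_snd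
  have h3 : IsOpen {p : ℝ × ℝ | p.2 < π / 2} := isOpen_lt continuous_snd continuous_const
  have h4 : IsOpen {p : ℝ × ℝ | p.1 < Real.cos p.2} :=
    isOpen_lt continuous_fst (Real.continuous_cos.comp continuous_snd)
  have : Sset = {p : ℝ × ℝ | 0 < p.1} ∩ ({p | 0 < p.2} ∩ ({p | p.2 < π/2} ∩ {p | p.1 < Real.cos p.2})) := by
    ext p; simp [Sset, mem_setOf_eq, and_assoc]
  rw [this]
  exact h1.inter (h2.inter (h3.inter h4))

noncomputable def Gfun (n : ℕ) (p : ℝ × ℝ) : ℝ :=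
  p.1 ^ n * (Real.cos p.2 ^ 2 / Real.sqrt (Real.cos p.2 ^ 2 - p.1 ^ 2))

lemma Gfun_meas (n : ℕ) : Measurable (Gfun n) := by
  apply Measurable.mul
  · exact (measurable_fst.pow_const n)
  · apply Measurable.div
    · exact ((Real.continuous_cos.comp continuous_snd).pow 2).measurable
    · exact Real.continuous_sqrt.measurable.comp
        ((((Real.continuous_cos.comp continuous_snd).pow 2).measurable).sub
          ((continuous_fst.pow 2).measurable))

lemma key (n : ℕ) :
    (∫ x in (0:ℝ)..1, x ^ n * ellE' x) = Wal n * Wal (n + 2) := by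
  classical
  set F : ℝ × ℝ → ℝ := Sset.indicator (Gfun n) with hF
  have hSmeas : MeasurableSet Sset := Sset_open.measurableSet
  have hFmeas : Measurable F := (Gfun_meas n).indicator hSmeas
  have hF_nonneg : ∀ p, 0 ≤ F p := by
    intro p
    rw [hF]
    by_cases hp : p ∈ Sset
    · rw [indicator_of_mem hp]
      exact mul_nonneg (pow_nonneg hp.1.le n) (div_nonneg (sq_nonneg _) (Real.sqrt_nonneg _))
    · rw [indicator_of_notMem hp]
  have hsect_fun : ∀ u ∈ Ioo (0:ℝ) (π/2),
      (fun x => F (x, u)) = (Ioo (0:ℝ) (Real.cos u)).indicator (fun x => Gfun n (x, u)) := by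
    intro u hu
    funext x
    by_cases hx : x ∈ Ioo (0:ℝ) (Real.cos u)
    · rw [indicator_of_mem hx, hF, indicator_of_mem]
      exact ⟨hx.1, hu.1, hu.2, hx.2⟩
    · rw [indicator_of_notMem hx, hF, indicator_of_notMem]
      intro hmem
      exact hx ⟨hmem.1, hmem.2.2.2⟩
  have hsect_zero : ∀ u : ℝ, u ∉ Ioo (0:ℝ) (π/2) → ∀ x, F (x, u) = 0 := by
    intro u hu x
    rw [hF, indicator_of_notMem]
    intro hmem
    exact hu ⟨hmem.2.1, hmem.2.2.1⟩
  have hGfact : ∀ u : ℝ, (fun x => Gfun n (x, u))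
      = fun x => Real.cos u ^ 2 * (x ^ n / Real.sqrt (Real.cos u ^ 2 - x ^ 2)) := by
    intro u; funext x; rw [Gfun]; ring
  have hsect_int : ∀ u ∈ Ioo (0:ℝ) (π/2), Integrable (fun x => F (x, u)) := by
    intro u hu
    have hc : 0 < Real.cos u := Real.cos_pos_of_mem_Ioo ⟨by linarith [hu.1, pi_pos], hu.2⟩
    rw [hsect_fun u hu, integrable_indicator_iff measurableSet_Ioo, hGfact u]
    exact (integrableOn_inner_x n hc).const_mul _
  have hsect_val : ∀ u ∈ Ioo (0:ℝ) (π/2),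
      (∫ x, F (x, u)) = Real.cos u ^ (n+2) * Wal n := by
    intro u hu
    have hc : 0 < Real.cos u := Real.cos_pos_of_mem_Ioo ⟨by linarith [hu.1, pi_pos], hu.2⟩
    rw [hsect_fun u hu, MeasureTheory.integral_indicator measurableSet_Ioo, hGfact u,
      MeasureTheory.integral_const_mul, inner_x n hc, Wn_eq_Wal]
    ring
  have hmarg_fun : (fun u => ∫ x, F (x, u))
      = (Ioo (0:ℝ) (π/2)).indicator (fun u => Real.cos u ^ (n+2) * Wal n) := by
    funext u
    by_cases hu : u ∈ Ioo (0:ℝ) (π/2)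
    · rw [indicator_of_mem hu]; exact hsect_val u hu
    · rw [indicator_of_notMem hu]
      have hzero : (fun x => F (x, u)) = fun _ => (0:ℝ) := funext (hsect_zero u hu)
      rw [hzero, MeasureTheory.integral_zero]
  have hmarg_int : Integrable (fun u => ∫ x, F (x, u)) := by
    rw [hmarg_fun, integrable_indicator_iff measurableSet_Ioo]
    exact ((Real.continuous_cos.pow (n+2)).mul continuous_const).integrableOn_Icc.mono_set
      Ioo_subset_Icc_self
  have hnorm : (fun u => ∫ x, ‖F (x, u)‖) = fun u => ∫ x, F (x, u) := by
    funext u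
    congr 1
    funext x
    rw [Real.norm_eq_abs, abs_of_nonneg (hF_nonneg _)]
  have hFint : Integrable (Function.uncurry fun x u => F (x, u))
      ((volume : Measure ℝ).prod volume) := by
    have hunc : (Function.uncurry fun x u => F (x, u)) = F := rfl
    rw [hunc]
    refine (integrable_prod_iff' hFmeas.aestronglyMeasurable).2 ⟨?_, ?_⟩
    · filter_upwards with u
      by_cases hu : u ∈ Ioo (0:ℝ) (π/2)
      · exact hsect_int u hu
      · have hzero : (fun x => F (x, u)) = fun _ => (0:ℝ) := funext (hsect_zero u hu)
        rw [hzero]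
        exact integrable_zero _ _ _
    · rw [hnorm]
      exact hmarg_int
  have hswap := MeasureTheory.integral_integral_swap (f := fun x u => F (x, u)) hFint
  have hell : ∀ x ∈ Ioo (0:ℝ) 1, (∫ u, F (x, u)) = x ^ n * ellE' x := by
    intro x hx
    have harccos_mem : Real.arccos x ∈ Icc 0 π := ⟨Real.arccos_nonneg x, Real.arccos_le_pi x⟩
    have husect : (fun u => F (x, u))
        = (Ioo (0:ℝ) (Real.arccos x)).indicator (fun u => Gfun n (x, u)) := by
      funext u
      by_cases hu : u ∈ Ioo (0:ℝ) (Real.arccos x)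
      · rw [indicator_of_mem hu, hF, indicator_of_mem]
        refine ⟨hx.1, hu.1, lt_of_lt_of_le hu.2 (Real.arccos_le_pi_div_two.2 hx.1.le), ?_⟩
        have h1 : Real.cos (Real.arccos x) < Real.cos u :=
          Real.strictAntiOn_cos ⟨hu.1.le, by linarith [hu.2, harccos_mem.2]⟩ harccos_mem hu.2
        rwa [Real.cos_arccos (by linarith [hx.1]) hx.2.le] at h1
      · rw [indicator_of_notMem hu, hF, indicator_of_notMem]
        intro hmem
        apply hu
        refine ⟨hmem.2.1, ?_⟩
        by_contra hcon
        push_neg at hcon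
        have h2 : Real.cos u ≤ Real.cos (Real.arccos x) :=
          Real.strictAntiOn_cos.antitoneOn harccos_mem
            ⟨hmem.2.1.le, by linarith [hmem.2.2.1, pi_pos]⟩ hcon
        rw [Real.cos_arccos (by linarith [hmem.1]) (by linarith [hmem.2.2.2, Real.cos_le_one u])] at h2
        linarith [hmem.2.2.2]
    rw [husect, MeasureTheory.integral_indicator measurableSet_Ioo]
    have hGx : (fun u => Gfun n (x, u))
        = fun u => x ^ n * (Real.cos u ^ 2 / Real.sqrt (Real.cos u ^ 2 - x ^ 2)) := rfl
    rw [hGx, MeasureTheory.integral_const_mul, theta_sub hx.1 hx.2]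
    congr 1
    rw [ellE', ellE, Real.sq_sqrt (by nlinarith [hx.1, hx.2] : (0:ℝ) ≤ 1 - x^2),
      intervalIntegral.integral_of_le (by positivity), integral_Ioc_eq_integral_Ioo]
  have hx_zero : ∀ x : ℝ, x ∉ Ioo (0:ℝ) 1 → (fun u => F (x, u)) = fun _ => (0:ℝ) := by
    intro x hx
    funext u
    rw [hF, indicator_of_notMem]
    intro hmem
    exact hx ⟨hmem.1, lt_of_lt_of_le hmem.2.2.2 (Real.cos_le_one u)⟩
  have hLHSfun : (fun x => ∫ u, F (x, u))
      = (Ioo (0:ℝ) 1).indicator (fun x => x ^ n * ellE' x) := by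
    funext x
    by_cases hx : x ∈ Ioo (0:ℝ) 1
    · rw [indicator_of_mem hx]; exact hell x hx
    · rw [indicator_of_notMem hx, hx_zero x hx, MeasureTheory.integral_zero]
  calc ∫ x in (0:ℝ)..1, x ^ n * ellE' x
      = ∫ x in Ioo (0:ℝ) 1, x ^ n * ellE' x := by
        rw [intervalIntegral.integral_of_le zero_le_one, integral_Ioc_eq_integral_Ioo]
    _ = ∫ x, (Ioo (0:ℝ) 1).indicator (fun x => x ^ n * ellE' x) x :=
        (MeasureTheory.integral_indicator measurableSet_Ioo).symm
    _ = ∫ x, ∫ u, F (x, u) := by rw [← hLHSfun]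
    _ = ∫ u, ∫ x, F (x, u) := hswap
    _ = ∫ u, (Ioo (0:ℝ) (π/2)).indicator (fun u => Real.cos u ^ (n+2) * Wal n) u := by
        rw [← hmarg_fun]
    _ = ∫ u in Ioo (0:ℝ) (π/2), Real.cos u ^ (n+2) * Wal n :=
        MeasureTheory.integral_indicator measurableSet_Ioo
    _ = (∫ u in Ioo (0:ℝ) (π/2), Real.cos u ^ (n+2)) * Wal n := by
        rw [MeasureTheory.integral_mul_const]
    _ = Wal (n+2) * Wal n := by
        rw [← integral_Ioc_eq_integral_Ioo, ← intervalIntegral.integral_of_le (by positivity),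
          cos_pow_integral]
    _ = Wal n * Wal (n+2) := mul_comm _ _

lemma Wal_gamma (n : ℕ) :
    Wal n = (Real.sqrt π / 2) * Real.Gamma ((n+1)/2) / Real.Gamma ((n+2)/2) := by
  induction n using Nat.strong_induction_on with
  | _ n ih =>
    match n with
    | 0 =>
      simp [Wal]
      rw [show ((2:ℝ))⁻¹ = 1/2 by norm_num, Real.Gamma_one_half_eq]
      rw [div_mul_eq_mul_div, Real.mul_self_sqrt pi_pos.le]
    | 1 =>
      simp [Wal]
      rw [show ((1:ℝ) + 2)/2 = 1/2 + 1 by norm_num, Real.Gamma_add_one (by norm_num),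
        Real.Gamma_one_half_eq]
      rw [eq_comm, div_eq_one_iff_eq (by positivity)]
      ring
    | (m+2) =>
      have h := ih m (by omega)
      have hg1 : Real.Gamma ((↑(m+2) + 1)/2) = ((m+1)/2) * Real.Gamma ((↑m+1)/2) := by
        rw [show ((↑(m+2):ℝ) + 1)/2 = (↑m+1)/2 + 1 by push_cast; ring, Real.Gamma_add_one]
        positivity
      have hg2 : Real.Gamma ((↑(m+2) + 2)/2) = ((m+2)/2) * Real.Gamma ((↑m+2)/2) := by
        rw [show ((↑(m+2):ℝ) + 2)/2 = (↑m+2)/2 + 1 by push_cast; ring, Real.Gamma_add_one]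
        positivity
      have hW : Wal (m+2) = (m+1)/(m+2) * Wal m := Wal_rec m
      rw [hW, h, hg1, hg2]
      have hΓ : Real.Gamma ((↑m+2)/2) ≠ 0 := by
        have := Real.Gamma_pos_of_pos (show 0 < ((m:ℝ)+2)/2 by positivity); linarith
      field_simp

lemma Wal_mul (n : ℕ) : Wal n * Wal (n+2)
    = (π / (2 * (n + 1))) * Real.Gamma ((n + 3) / 2) ^ 2
        / (Real.Gamma ((n + 2) / 2) * Real.Gamma ((n + 4) / 2)) := by
  have h1 := Wal_gamma n
  have h2 := Wal_gamma (n+2)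
  rw [show ((↑(n+2):ℝ)+1) = ↑n + 3 by push_cast; ring,
    show ((↑(n+2):ℝ)+2) = ↑n + 4 by push_cast; ring] at h2
  have hg3 : Real.Gamma ((↑n+3)/2) = ((n+1)/2) * Real.Gamma ((↑n+1)/2) := by
    rw [show ((n:ℝ) + 3)/2 = (↑n+1)/2 + 1 by ring, Real.Gamma_add_one (by positivity)]
  have p1 : Real.Gamma ((↑n+1)/2) > 0 := Real.Gamma_pos_of_pos (by positivity)
  have p2 : Real.Gamma ((↑n+2)/2) > 0 := Real.Gamma_pos_of_pos (by positivity)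
  have p4 : Real.Gamma ((↑n+4)/2) > 0 := Real.Gamma_pos_of_pos (by positivity)
  rw [h1, h2, hg3]
  have hπ : Real.sqrt π * Real.sqrt π = π := Real.mul_self_sqrt pi_pos.le
  have hn1 : ((n:ℝ)+1) ≠ 0 := by positivity
  set s := Real.sqrt π with hs
  field_simp
  rw [← hπ]; ring

end Aux

theorem stmt_4 : ∀ n : ℕ,
    (∫ x in (0:ℝ)..1, x ^ n * ellE' x)
      = (π / (2 * (n + 1))) * Real.Gamma ((n + 3) / 2) ^ 2
          / (Real.Gamma ((n + 2) / 2) * Real.Gamma ((n + 4) / 2)) := by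
  intro n
  rw [key n, Wal_mul n]
end

section
/- For all t with 0 ≤ t < 1, ∫₀¹ (1/(1 − t²x²)) K'(x) dx = (π/2) K(t). -/
open Real intervalIntegral

open MeasureTheory Set Filter Topology

set_option maxHeartbeats 1000000

noncomputable def atnh (z : ℝ) : ℝ := (Real.log (1 + z) - Real.log (1 - z)) / 2

lemma atnh_zero : atnh 0 = 0 := by simp [atnh]

lemma hasDerivAt_atnh {z : ℝ} (h1 : -1 < z) (h2 : z < 1) :
    HasDerivAt atnh (1 / (1 - z^2)) z := by
  have p1 : (0:ℝ) < 1 + z := by linarith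
  have p2 : (0:ℝ) < 1 - z := by linarith
  have d1 : HasDerivAt (fun z : ℝ => Real.log (1 + z)) (1/(1+z)) z := by
    simpa [Function.comp_def] using (Real.hasDerivAt_log p1.ne').comp z ((hasDerivAt_id z).const_add 1)
  have d2 : HasDerivAt (fun z : ℝ => Real.log (1 - z)) (-(1/(1-z))) z := by
    have := (Real.hasDerivAt_log p2.ne').comp z ((hasDerivAt_id z).neg.const_add 1)
    simpa [div_eq_mul_inv, Function.comp_def] using this
  have hz : 1 - z^2 ≠ 0 := by nlinarith
  have := (d1.sub d2).div_const 2
  convert this using 1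
  rfl
  rfl
  rfl
  field_simp
  ring

lemma ftc3 {lam : ℝ} (h0 : 0 < lam) (h1 : lam < 1) :
    ∫ u in (0:ℝ)..1, 1 / (1 - lam^2*u^2) = (1/lam) * atnh lam := by
  have key : ∀ u ∈ uIcc (0:ℝ) 1, HasDerivAt (fun u => (1/lam) * atnh (lam*u))
      (1 / (1 - lam^2*u^2)) u := by
    intro u hu
    simp only [uIcc_of_le (zero_le_one' ℝ), mem_Icc] at hu
    have hlu1 : -1 < lam * u := by nlinarith [hu.1, hu.2]
    have hlu2 : lam * u < 1 := by nlinarith [hu.1, hu.2]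
    have := ((hasDerivAt_atnh hlu1 hlu2).comp u ((hasDerivAt_id u).const_mul lam)).const_mul (1/lam)
    convert this using 1
    rfl
    rfl
    rfl
    field_simp
  have hint : IntervalIntegrable (fun u => 1 / (1 - lam^2*u^2)) volume 0 1 := by
    apply ContinuousOn.intervalIntegrable
    apply ContinuousOn.div continuousOn_const
    · fun_prop
    · intro u hu
      simp only [uIcc_of_le (zero_le_one' ℝ), mem_Icc] at hu
      have hl2 : lam^2 < 1 := by nlinarith
      have hu2 : u^2 ≤ 1 := by nlinarith [hu.1, hu.2]
      have : lam^2 * u^2 < 1 := by nlinarith [sq_nonneg lam, sq_nonneg u]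
      linarith
  rw [intervalIntegral.integral_eq_sub_of_hasDerivAt key hint]
  simp [atnh_zero, mul_one]

lemma sqsq_lt_one {a b : ℝ} (ha0 : 0 ≤ a) (ha : a < 1) (hb0 : 0 ≤ b) (hb : b ≤ 1) :
    a^2 * b^2 < 1 := by
  have h1 : a^2 < 1 := by nlinarith
  have h2 : b^2 ≤ 1 := by nlinarith
  nlinarith [sq_nonneg a, sq_nonneg b]

lemma ftc1 {t c s lam : ℝ} (ht0 : 0 ≤ t) (ht1 : t < 1) (hc : 0 < c) (hs : 0 < s)
    (hcs : c^2 + s^2 = 1) (hlam : lam = Real.sqrt (s^2 + t^2*c^2)) :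
    ∫ x in (0:ℝ)..1, 1 / ((1 - t^2*x^2) * Real.sqrt (c^2 + x^2*s^2))
      = (1/lam) * atnh lam := by
  have hpos : (0:ℝ) < s^2 + t^2*c^2 := by positivity
  have hlam2 : lam^2 = s^2 + t^2*c^2 := by rw [hlam]; exact Real.sq_sqrt hpos.le
  have hlam0 : 0 < lam := by rw [hlam]; exact Real.sqrt_pos.2 hpos
  have key : ∀ x ∈ uIcc (0:ℝ) 1,
      HasDerivAt (fun x => (1/lam) * atnh (lam * x / Real.sqrt (c^2 + x^2*s^2)))
      (1 / ((1 - t^2*x^2) * Real.sqrt (c^2 + x^2*s^2))) x := by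
    intro x hx
    simp only [uIcc_of_le (zero_le_one' ℝ), mem_Icc] at hx
    have hQ : (0:ℝ) < c^2 + x^2*s^2 := by positivity
    set q := Real.sqrt (c^2 + x^2*s^2) with hqdef
    have hq : 0 < q := Real.sqrt_pos.2 hQ
    have hq2 : q^2 = c^2 + x^2*s^2 := Real.sq_sqrt hQ.le
    have htx : 0 < 1 - t^2*x^2 := by
      have := sqsq_lt_one ht0 ht1 hx.1 hx.2; linarith
    have dq : HasDerivAt (fun x : ℝ => Real.sqrt (c^2 + x^2*s^2)) ((2*x*s^2) / (2*q)) x := by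
      have inner : HasDerivAt (fun x : ℝ => c^2 + x^2*s^2) (2*x*s^2) x := by
        have := ((hasDerivAt_pow 2 x).mul_const (s^2)).const_add (c^2)
        simpa using this
      exact inner.sqrt hQ.ne'
    have dr' : HasDerivAt (fun x : ℝ => lam * x / Real.sqrt (c^2 + x^2*s^2))
        (lam * c^2 / q^3) x := by
      convert (((hasDerivAt_id x).const_mul lam).div dq hq.ne') using 1
      rfl
      rfl
      rfl
      simp only [id_eq, ← hqdef]
      field_simp
      linear_combination (-1) * hq2
    have hr2 : (lam * x / q)^2 < 1 := by
      rw [div_pow, div_lt_one (by positivity)]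
      have e : lam^2 * x^2 = s^2*x^2 + t^2*c^2*x^2 := by rw [hlam2]; ring
      rw [mul_pow, e, hq2]
      nlinarith [mul_pos (pow_pos hc 2) htx]
    have hr0 : 0 ≤ lam * x / q := div_nonneg (mul_nonneg hlam0.le hx.1) hq.le
    have hrlt : lam * x / q < 1 := by nlinarith [sq_nonneg (lam*x/q - 1)]
    have hrgt : -1 < lam * x / q := by linarith
    have hmain := ((hasDerivAt_atnh hrgt hrlt).comp x dr').const_mul (1/lam)
    convert hmain using 1
    rfl
    rfl
    rfl
    have h1r : 1 - (lam*x/q)^2 = (c^2 * (1 - t^2*x^2)) / q^2 := by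
      field_simp
      linear_combination hq2 - x^2*hlam2
    rw [h1r]
    field_simp
  have hint : IntervalIntegrable
      (fun x => 1 / ((1 - t^2*x^2) * Real.sqrt (c^2 + x^2*s^2))) volume 0 1 := by
    apply ContinuousOn.intervalIntegrable
    apply ContinuousOn.div continuousOn_const
    · fun_prop
    · intro x hx
      simp only [uIcc_of_le (zero_le_one' ℝ), mem_Icc] at hx
      have htx : 0 < 1 - t^2*x^2 := by
        have := sqsq_lt_one ht0 ht1 hx.1 hx.2; linarith
      have : (0:ℝ) < Real.sqrt (c^2 + x^2*s^2) := Real.sqrt_pos.2 (by positivity)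
      positivity
  rw [intervalIntegral.integral_eq_sub_of_hasDerivAt key hint]
  have e0 : Real.sqrt (c^2 + 0^2*s^2) = c := by
    simp [Real.sqrt_sq hc.le]
  have e1 : Real.sqrt (c^2 + 1^2*s^2) = 1 := by
    rw [one_pow, one_mul, hcs, Real.sqrt_one]
  rw [e0, e1]
  simp [atnh_zero]

lemma tan_image : Real.tan '' (Ioo 0 (π/2)) = Ioi 0 := by
  ext y
  constructor
  · rintro ⟨θ, hθ, rfl⟩
    exact Real.tan_pos_of_pos_of_lt_pi_div_two hθ.1 hθ.2
  · intro hy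
    refine ⟨Real.arctan y, ⟨?_, Real.arctan_lt_pi_div_two y⟩, Real.tan_arctan y⟩
    have := Real.arctan_strictMono hy
    rwa [Real.arctan_zero] at this

lemma intIoi {A C : ℝ} (hA : 0 < A) (hC : 0 < C) :
    ∫ v in Ioi (0:ℝ), 1 / (A * v^2 + C) = π / (2 * Real.sqrt (A*C)) := by
  set k := Real.sqrt (A/C) with hkdef
  set m := Real.sqrt (A*C) with hmdef
  have hk : 0 < k := Real.sqrt_pos.2 (div_pos hA hC)
  have hm : 0 < m := Real.sqrt_pos.2 (mul_pos hA hC)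
  have hk2 : k^2 = A/C := Real.sq_sqrt (div_pos hA hC).le
  have hmck : m = C * k := by
    rw [hmdef, hkdef, show A*C = C^2*(A/C) by field_simp,
      Real.sqrt_mul (by positivity) _, Real.sqrt_sq hC.le]
  have hderiv : ∀ v ∈ Ioi (0:ℝ), HasDerivAt
      (fun v => Real.arctan (k * v) / m) (1 / (A * v^2 + C)) v := by
    intro v _
    have h1 : HasDerivAt (fun v : ℝ => k * v) k v := by
      simpa using (hasDerivAt_id v).const_mul k
    have h2 := ((Real.hasDerivAt_arctan (k * v)).comp v h1).div_const m
    convert h2 using 1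
    rfl
    rfl
    rfl
    have hden : (0:ℝ) < A*v^2 + C := by positivity
    rw [hmck, mul_pow, hk2]
    field_simp
    ring
  have hint : IntegrableOn (fun v => 1 / (A * v^2 + C)) (Ioi (0:ℝ)) := by
    have hmin : 0 < min A C := lt_min hA hC
    have hbase : Integrable (fun v : ℝ => (min A C)⁻¹ * (1+v^2)⁻¹) :=
      integrable_inv_one_add_sq.const_mul _
    apply (hbase.integrableOn (s := Ioi 0)).mono'
    · apply Continuous.aestronglyMeasurable
      apply continuous_const.div (by fun_prop)
      intro v; positivity
    · filter_upwards with v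
      have h1 : (0:ℝ) < A*v^2 + C := by positivity
      have h2 : min A C * (1 + v^2) ≤ A*v^2 + C := by
        have := min_le_left A C; have := min_le_right A C
        nlinarith [sq_nonneg v, hmin.le]
      rw [Real.norm_eq_abs, abs_of_pos (by positivity)]
      calc 1/(A*v^2+C) ≤ 1/((min A C)*(1+v^2)) :=
            one_div_le_one_div_of_le (by positivity) h2
        _ = (min A C)⁻¹ * (1+v^2)⁻¹ := by rw [one_div, mul_inv]
  have htend : Tendsto (fun v => Real.arctan (k * v) / m) atTop (𝓝 ((π/2)/m)) := by
    apply Tendsto.div_const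
    apply (tendsto_nhds_of_tendsto_nhdsWithin Real.tendsto_arctan_atTop).comp
    exact Tendsto.const_mul_atTop hk tendsto_id
  have := integral_Ioi_of_hasDerivAt_of_tendsto
    (((Real.continuous_arctan.comp (continuous_const.mul continuous_id)).div_const m).continuousWithinAt) hderiv hint htend
  rw [this]
  simp [div_div]

lemma thetaInt {A C : ℝ} (hA : 0 < A) (hC : 0 < C) (hAC : A ≤ C) :
    ∫ θ in Ioo 0 (π/2), 1 / (A + (C - A) * Real.cos θ^2) = π / (2 * Real.sqrt (A*C)) := by
  have hinj : InjOn Real.tan (Ioo 0 (π/2)) := by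
    apply Real.injOn_tan.mono
    intro θ hθ
    exact ⟨by linarith [hθ.1, Real.pi_pos], hθ.2⟩
  have hderiv : ∀ θ ∈ Ioo (0:ℝ) (π/2), HasDerivWithinAt Real.tan
      (1 / Real.cos θ^2) (Ioo 0 (π/2)) θ := by
    intro θ hθ
    have hcos : Real.cos θ ≠ 0 := by
      have : 0 < Real.cos θ := Real.cos_pos_of_mem_Ioo ⟨by linarith [hθ.1, Real.pi_pos], hθ.2⟩
      exact this.ne'
    exact (Real.hasDerivAt_tan hcos).hasDerivWithinAt
  have key := integral_image_eq_integral_abs_deriv_smul measurableSet_Ioo hderiv hinj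
    (fun v => 1 / (A * v^2 + C))
  rw [tan_image, intIoi hA hC] at key
  rw [key]
  apply setIntegral_congr_fun measurableSet_Ioo
  intro θ hθ
  have hcos : 0 < Real.cos θ := Real.cos_pos_of_mem_Ioo ⟨by linarith [hθ.1, Real.pi_pos], hθ.2⟩
  have hs2 : Real.sin θ^2 = 1 - Real.cos θ^2 := by
    have := Real.sin_sq_add_cos_sq θ; linarith
  have hden : 0 < A + (C-A) * Real.cos θ^2 := by nlinarith [Real.cos_sq_le_one θ]
  simp only [smul_eq_mul]
  rw [abs_of_pos (by positivity), Real.tan_eq_sin_div_cos, div_pow, hs2]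
  have hden' : A - A*Real.cos θ^2 + C*Real.cos θ^2 ≠ 0 := by nlinarith
  field_simp [hden']
  have hx := mul_inv_cancel₀ hden'
  linear_combination -hx

lemma sin_image : Real.sin '' (Ioo 0 (π/2)) = Ioo 0 1 := by
  ext y
  constructor
  · rintro ⟨θ, hθ, rfl⟩
    constructor
    · exact Real.sin_pos_of_pos_of_lt_pi hθ.1 (by linarith [hθ.2, Real.pi_pos])
    · have h := Real.strictMonoOn_sin
        (Set.mem_Icc.2 ⟨by linarith [hθ.1, Real.pi_pos], hθ.2.le⟩)
        (Set.mem_Icc.2 ⟨by linarith [Real.pi_pos], le_refl _⟩) hθ.2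
      rwa [Real.sin_pi_div_two] at h
  · intro hy
    refine ⟨Real.arcsin y, ⟨Real.arcsin_pos.2 hy.1, ?_⟩, Real.sin_arcsin (by linarith [hy.1]) hy.2.le⟩
    exact (Real.arcsin_lt_pi_div_two).2 hy.2

lemma subst_sin {t : ℝ} :
    ∫ u in Ioo (0:ℝ) 1, π / (2 * Real.sqrt (1-u^2) * Real.sqrt (1-t^2*u^2))
      = ∫ θ in Ioo (0:ℝ) (π/2), (π/2) * (1 / Real.sqrt (1 - t^2 * Real.sin θ^2)) := by
  have hinj : InjOn Real.sin (Ioo 0 (π/2)) := by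
    apply Real.injOn_sin.mono
    intro θ hθ
    exact ⟨by linarith [hθ.1, Real.pi_pos], hθ.2.le⟩
  rw [← sin_image, integral_image_eq_integral_abs_deriv_smul measurableSet_Ioo
      (fun θ _ => (Real.hasDerivAt_sin θ).hasDerivWithinAt) hinj]
  apply setIntegral_congr_fun measurableSet_Ioo
  intro θ hθ
  have hcos : 0 < Real.cos θ := Real.cos_pos_of_mem_Ioo ⟨by linarith [hθ.1, Real.pi_pos], hθ.2⟩
  have h1 : Real.sqrt (1 - Real.sin θ^2) = Real.cos θ := by
    rw [show 1 - Real.sin θ^2 = Real.cos θ^2 by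
      have := Real.sin_sq_add_cos_sq θ; linarith]
    exact Real.sqrt_sq hcos.le
  simp only [smul_eq_mul]
  rw [abs_of_pos hcos, h1]
  field_simp [hcos.ne']

lemma int_rpow_Ioo {b r : ℝ} (hb : 0 < b) (hr : -1 < r) :
    IntegrableOn (fun x : ℝ => x ^ r) (Ioo 0 b) := by
  have h := intervalIntegral.intervalIntegrable_rpow' (a := 0) (b := b) hr
  rw [intervalIntegrable_iff_integrableOn_Ioc_of_le hb.le] at h
  exact h.mono_set Ioo_subset_Ioc_self

lemma int_rpow_Ioo' {b r : ℝ} (hb : 0 < b) (hr : -1 < r) :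
    IntegrableOn (fun x : ℝ => (b - x) ^ r) (Ioo 0 b) := by
  have h := (intervalIntegral.intervalIntegrable_rpow' (a := 0) (b := b) hr).comp_sub_left b
  simp only [sub_zero, sub_self] at h
  have h' := h.symm
  rw [intervalIntegrable_iff_integrableOn_Ioc_of_le hb.le] at h'
  exact h'.mono_set Ioo_subset_Ioc_self

lemma add_ge_geo {a b : ℝ} (ha : 0 ≤ a) (hb : 0 ≤ b) :
    a^(3/4:ℝ) * b^(1/4:ℝ) ≤ a + b := by
  rcases le_total a b with h | h
  · calc a^(3/4:ℝ)*b^(1/4:ℝ) ≤ b^(3/4:ℝ)*b^(1/4:ℝ) := by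
          apply mul_le_mul_of_nonneg_right (Real.rpow_le_rpow ha h (by norm_num))
            (Real.rpow_nonneg hb _)
      _ = b := by
          rw [← Real.rpow_add' hb (by norm_num)]
          norm_num
      _ ≤ a + b := le_add_of_nonneg_left ha
  · calc a^(3/4:ℝ)*b^(1/4:ℝ) ≤ a^(3/4:ℝ)*a^(1/4:ℝ) := by
          apply mul_le_mul_of_nonneg_left (Real.rpow_le_rpow hb h (by norm_num))
            (Real.rpow_nonneg ha _)
      _ = a := by
          rw [← Real.rpow_add' ha (by norm_num)]
          norm_num
      _ ≤ a + b := le_add_of_nonneg_right hb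

lemma cos_lb {θ : ℝ} (h0 : 0 < θ) (h1 : θ < π/2) : 2/π * (π/2 - θ) ≤ Real.cos θ := by
  have := Real.mul_le_sin (x := π/2 - θ) (by linarith) (by linarith)
  rwa [Real.sin_pi_div_two_sub] at this

lemma fubA {t : ℝ} (ht0 : 0 ≤ t) (ht1 : t < 1) :
    Integrable (fun p : ℝ × ℝ =>
        1 / ((1 - t^2*p.1^2) * Real.sqrt (Real.cos p.2^2 + p.1^2 * Real.sin p.2^2)))
      ((volume.restrict (Ioo 0 1)).prod (volume.restrict (Ioo 0 (π/2)))) := by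
  have hmeas : AEStronglyMeasurable (fun p : ℝ × ℝ =>
      1 / ((1 - t^2*p.1^2) * Real.sqrt (Real.cos p.2^2 + p.1^2 * Real.sin p.2^2)))
      ((volume.restrict (Ioo 0 1)).prod (volume.restrict (Ioo 0 (π/2)))) := by
    apply Measurable.aestronglyMeasurable
    apply Measurable.div measurable_const
    fun_prop
  have hgx : Integrable (fun x : ℝ => 2/(1-t^2) * x ^ (-(1/2) : ℝ))
      (volume.restrict (Ioo 0 1)) :=
    (int_rpow_Ioo one_pos (by norm_num)).const_mul _
  have hgθ : Integrable (fun θ : ℝ => (π/2 - θ) ^ (-(1/2):ℝ))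
      (volume.restrict (Ioo 0 (π/2))) :=
    int_rpow_Ioo' (by positivity) (by norm_num)
  apply (hgx.mul_prod hgθ).mono' hmeas
  rw [Measure.prod_restrict]
  filter_upwards [ae_restrict_mem (measurableSet_Ioo.prod measurableSet_Ioo)] with p hp
  obtain ⟨x, θ⟩ := p
  obtain ⟨hx, hθ⟩ := hp
  simp only at hx hθ ⊢
  have hc : 0 < Real.cos θ :=
    Real.cos_pos_of_mem_Ioo ⟨by linarith [hθ.1, Real.pi_pos], hθ.2⟩
  have hsin : 0 < Real.sin θ := Real.sin_pos_of_pos_of_lt_pi hθ.1 (by linarith [hθ.2, Real.pi_pos])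
  have ht2 : 0 < 1 - t^2*x^2 := by
    have := sqsq_lt_one ht0 ht1 hx.1.le hx.2.le; linarith
  have hQ : (0:ℝ) < Real.cos θ^2 + x^2 * Real.sin θ^2 := by positivity
  set Q := Real.cos θ^2 + x^2 * Real.sin θ^2 with hQdef
  have hθpos : 0 < π/2 - θ := by linarith [hθ.2]
  -- step 1 : Q ≥ (cos² + x²)/4
  have step1 : (Real.cos θ^2 + x^2)/4 ≤ Q := by
    rw [hQdef]
    have hss := Real.sin_sq_add_cos_sq θ
    rcases le_or_gt (1/2) (Real.sin θ) with h | h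
    · have hs2 : 1/4 ≤ Real.sin θ^2 := by nlinarith
      have hxx : x^2/4 ≤ x^2 * Real.sin θ^2 := by nlinarith [sq_nonneg x]
      linarith [sq_nonneg (Real.cos θ)]
    · have hs2 : Real.sin θ^2 ≤ 1/4 := by nlinarith
      have hc2 : 3/4 ≤ Real.cos θ^2 := by linarith
      have hx2 : x^2 ≤ 1 := by nlinarith [hx.2.le, hx.1.le]
      have hc1 : Real.cos θ^2 ≤ 1 := by nlinarith [Real.cos_le_one θ]
      have := mul_nonneg (sq_nonneg x) (sq_nonneg (Real.sin θ))
      linarith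
  -- step 2 : (cos² + x²)/4 ≥ cos·x/2
  have step2 : Real.cos θ * x / 2 ≤ (Real.cos θ^2 + x^2)/4 := by nlinarith [sq_nonneg (Real.cos θ - x)]
  -- step 3 : cos ≥ (2/π)(π/2-θ)
  have step3 := cos_lb hθ.1 hθ.2
  -- combine : Q ≥ (π/2-θ)*x/π
  have hpi : (0:ℝ) < π := Real.pi_pos
  have step3' : 2*(π/2 - θ) ≤ Real.cos θ * π := by
    rw [div_mul_eq_mul_div, div_le_iff₀ hpi] at step3
    linarith
  have hkey : (π/2 - θ) * x / π ≤ Q := by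
    have h6 : (π/2-θ)*x/π ≤ Real.cos θ * x / 2 := by
      rw [div_le_div_iff₀ hpi (by norm_num)]
      nlinarith [mul_le_mul_of_nonneg_right step3' hx.1.le]
    linarith
  -- √Q ≥ √x √(π/2-θ) / 2
  have h4 : x * (π/2 - θ) ≤ 4 * Q := by
    have hpi4 : π ≤ 4 := by linarith [Real.pi_le_four]
    rw [div_le_iff₀ hpi] at hkey
    nlinarith [mul_nonneg hθpos.le hx.1.le]
  have h5 : Real.sqrt x * Real.sqrt (π/2-θ) ≤ 2 * Real.sqrt Q := by
    rw [← Real.sqrt_mul hx.1.le]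
    calc Real.sqrt (x*(π/2-θ)) ≤ Real.sqrt (4*Q) := Real.sqrt_le_sqrt h4
      _ = 2 * Real.sqrt Q := by
          rw [show (4:ℝ) = 2^2 by norm_num, Real.sqrt_mul (by positivity), Real.sqrt_sq (by norm_num)]
  -- final bound
  have hsx : 0 < Real.sqrt x := Real.sqrt_pos.2 hx.1
  have hsθ : 0 < Real.sqrt (π/2-θ) := Real.sqrt_pos.2 hθpos
  have hsQ : 0 < Real.sqrt Q := Real.sqrt_pos.2 hQ
  have ht3 : 1 - t^2 ≤ 1 - t^2*x^2 := by
    have hx2 : x^2 ≤ 1 := by nlinarith [hx.1.le, hx.2.le]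
    nlinarith [mul_nonneg (sq_nonneg t) (sub_nonneg.2 hx2)]
  have ht4 : 0 < 1 - t^2 := by nlinarith
  rw [Real.norm_eq_abs, abs_of_nonneg (by positivity)]
  have hrw : 2/(1-t^2) * x ^ (-(1/2):ℝ) * ((π/2-θ) ^ (-(1/2):ℝ))
      = 2 / ((1-t^2) * Real.sqrt x * Real.sqrt (π/2-θ)) := by
    rw [Real.rpow_neg hx.1.le, Real.rpow_neg hθpos.le, ← Real.sqrt_eq_rpow, ← Real.sqrt_eq_rpow]
    field_simp
  rw [hrw, div_le_div_iff₀ (by positivity) (mul_pos (mul_pos ht4 hsx) hsθ)]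
  calc 1 * ((1-t^2) * Real.sqrt x * Real.sqrt (π/2-θ))
      ≤ (1-t^2) * (2 * Real.sqrt Q) := by
        rw [one_mul, mul_assoc]
        exact mul_le_mul_of_nonneg_left h5 ht4.le
    _ ≤ 2 * ((1 - t^2*x^2) * Real.sqrt Q) := by
        have := mul_le_mul_of_nonneg_right ht3 hsQ.le
        nlinarith

lemma fubB {t : ℝ} (ht0 : 0 ≤ t) (ht1 : t < 1) :
    Integrable (fun p : ℝ × ℝ =>
        1 / (1 - p.2^2 + p.2^2 * (1-t^2) * Real.cos p.1^2))
      ((volume.restrict (Ioo 0 (π/2))).prod (volume.restrict (Ioo 0 1))) := by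
  set em : ℝ := min (1-t^2) 3 with hemdef
  have ht4 : 0 < 1 - t^2 := by nlinarith
  have hem : 0 < em := lt_min ht4 (by norm_num)
  have hem3 : em ≤ 3 := min_le_right _ _
  have hemt : em ≤ 1 - t^2 := min_le_left _ _
  have hmeas : AEStronglyMeasurable (fun p : ℝ × ℝ =>
      1 / (1 - p.2^2 + p.2^2 * (1-t^2) * Real.cos p.1^2))
      ((volume.restrict (Ioo 0 (π/2))).prod (volume.restrict (Ioo 0 1))) := by
    apply Measurable.aestronglyMeasurable
    apply Measurable.div measurable_const
    fun_prop
  have hgθ : Integrable (fun θ : ℝ => 16/em * (π/2 - θ) ^ (-(1/2):ℝ))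
      (volume.restrict (Ioo 0 (π/2))) :=
    (int_rpow_Ioo' (by positivity) (by norm_num)).const_mul _
  have hgu : Integrable (fun u : ℝ => (1 - u) ^ (-(3/4):ℝ))
      (volume.restrict (Ioo 0 1)) :=
    int_rpow_Ioo' one_pos (by norm_num)
  apply (hgθ.mul_prod hgu).mono' hmeas
  rw [Measure.prod_restrict]
  filter_upwards [ae_restrict_mem (measurableSet_Ioo.prod measurableSet_Ioo)] with p hp
  obtain ⟨θ, u⟩ := p
  obtain ⟨hθ, hu⟩ := hp
  simp only at hθ hu ⊢
  have hpi : (0:ℝ) < π := Real.pi_pos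
  have hc : 0 < Real.cos θ :=
    Real.cos_pos_of_mem_Ioo ⟨by linarith [hθ.1], hθ.2⟩
  have hc1 : Real.cos θ ≤ 1 := Real.cos_le_one θ
  have hP : 0 < π/2 - θ := by linarith [hθ.2]
  set D : ℝ := 1 - u^2 + u^2 * (1-t^2) * Real.cos θ^2 with hDdef
  have hu1 : 0 < 1 - u := by linarith [hu.2]
  have hD1 : 1 - u ≤ D := by
    rw [hDdef]
    nlinarith [hu.1.le, hu.2.le, mul_nonneg (mul_nonneg (sq_nonneg u) ht4.le) (sq_nonneg (Real.cos θ))]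
  have hD2 : em/4 * Real.cos θ^2 ≤ D := by
    rw [hDdef]
    rcases le_or_gt (1/2) u with h | h
    · have hu2 : 1/4 ≤ u^2 := by nlinarith [hu.1.le]
      have h1 : em * Real.cos θ^2 ≤ (1-t^2) * Real.cos θ^2 :=
        mul_le_mul_of_nonneg_right hemt (sq_nonneg _)
      nlinarith [hu.2.le, mul_nonneg ht4.le (sq_nonneg (Real.cos θ)), sq_nonneg (Real.cos θ)]
    · have hu2 : u^2 ≤ 1/4 := by nlinarith [hu.1.le]
      have hc2 : Real.cos θ^2 ≤ 1 := by nlinarith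
      nlinarith [mul_nonneg (mul_nonneg (sq_nonneg u) ht4.le) (sq_nonneg (Real.cos θ))]
  have hDpos : 0 < D := lt_of_lt_of_le hu1 hD1
  have hD : em/8 * ((1-u) + Real.cos θ^2) ≤ D := by
    have h1 : em/8 * (1-u) ≤ 1/2 * (1-u) :=
      mul_le_mul_of_nonneg_right (by linarith) hu1.le
    nlinarith [hD1, hD2]
  -- AM-GM
  have hgeo : (1-u)^(3/4:ℝ) * (Real.cos θ^2)^(1/4:ℝ) ≤ (1-u) + Real.cos θ^2 :=
    add_ge_geo hu1.le (sq_nonneg _)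
  have ecos : (Real.cos θ^2)^(1/4:ℝ) = Real.cos θ ^ (1/2:ℝ) := by
    rw [← Real.rpow_natCast (Real.cos θ) 2, ← Real.rpow_mul hc.le]
    norm_num
  -- P^{1/2} ≤ 2 c^{1/2}
  have hP2c : π/2 - θ ≤ 2 * Real.cos θ := by
    have h0 := cos_lb hθ.1 hθ.2
    rw [div_mul_eq_mul_div, div_le_iff₀ hpi] at h0
    have h4 := Real.pi_le_four
    nlinarith [mul_le_mul_of_nonneg_left h4 hc.le]
  have hm2 : (π/2 - θ)^(1/2:ℝ) ≤ 2 * Real.cos θ^(1/2:ℝ) := by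
    calc (π/2 - θ)^(1/2:ℝ) ≤ (2*Real.cos θ)^(1/2:ℝ) :=
          Real.rpow_le_rpow hP.le hP2c (by norm_num)
      _ = 2^(1/2:ℝ) * Real.cos θ^(1/2:ℝ) := Real.mul_rpow (by norm_num) hc.le
      _ ≤ 2 * Real.cos θ^(1/2:ℝ) := by
          apply mul_le_mul_of_nonneg_right _ (Real.rpow_nonneg hc.le _)
          calc (2:ℝ)^(1/2:ℝ) ≤ 2^(1:ℝ) :=
                Real.rpow_le_rpow_of_exponent_le (by norm_num) (by norm_num)
            _ = 2 := Real.rpow_one 2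
  -- main chain : D ≥ em/16 * (1-u)^{3/4} * P^{1/2}
  have hk1 : (0:ℝ) ≤ (1-u)^(3/4:ℝ) := Real.rpow_nonneg hu1.le _
  have hk2 : (0:ℝ) ≤ Real.cos θ^(1/2:ℝ) := Real.rpow_nonneg hc.le _
  have hk3 : (0:ℝ) ≤ (π/2-θ)^(1/2:ℝ) := Real.rpow_nonneg hP.le _
  have hmain : em/16 * ((1-u)^(3/4:ℝ) * (π/2-θ)^(1/2:ℝ)) ≤ D := by
    have m1 : em/8 * ((1-u)^(3/4:ℝ) * Real.cos θ^(1/2:ℝ)) ≤ D := by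
      rw [← ecos]
      calc em/8 * ((1-u)^(3/4:ℝ) * (Real.cos θ^2)^(1/4:ℝ))
          ≤ em/8 * ((1-u) + Real.cos θ^2) := by
            apply mul_le_mul_of_nonneg_left hgeo (by positivity)
        _ ≤ D := hD
    have m2 : (1-u)^(3/4:ℝ) * (π/2-θ)^(1/2:ℝ) ≤ (1-u)^(3/4:ℝ) * (2*Real.cos θ^(1/2:ℝ)) :=
      mul_le_mul_of_nonneg_left hm2 hk1
    nlinarith [mul_le_mul_of_nonneg_left m2 (le_of_lt (by positivity : (0:ℝ) < em/16))]
  -- finish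
  rw [Real.norm_eq_abs, abs_of_nonneg (by positivity)]
  have hrw : 16/em * (π/2-θ) ^ (-(1/2):ℝ) * ((1-u) ^ (-(3/4):ℝ))
      = 16 / (em * ((π/2-θ)^(1/2:ℝ) * (1-u)^(3/4:ℝ))) := by
    rw [Real.rpow_neg hP.le, Real.rpow_neg hu1.le]
    field_simp
  rw [hrw]
  have hk3' : 0 < (π/2-θ)^(1/2:ℝ) := Real.rpow_pos_of_pos hP _
  have hk1' : 0 < (1-u)^(3/4:ℝ) := Real.rpow_pos_of_pos hu1 _
  rw [div_le_div_iff₀ hDpos (by positivity)]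
  nlinarith [hmain]


theorem stmt_9 : ∀ t : ℝ, 0 ≤ t → t < 1 →
    (∫ x in (0:ℝ)..1, (1 / (1 - t^2 * x^2)) * ellK' x) = (π / 2) * ellK t := by
  intro t ht0 ht1
  have hpi : (0:ℝ) < π := Real.pi_pos
  have ht4 : 0 < 1 - t^2 := by nlinarith
  -- Step 1 : LHS as iterated set integral
  have step1 : (∫ x in (0:ℝ)..1, (1 / (1 - t^2 * x^2)) * ellK' x)
      = ∫ x in Ioo (0:ℝ) 1, ∫ θ in Ioo (0:ℝ) (π/2),
          1 / ((1 - t^2*x^2) * Real.sqrt (Real.cos θ^2 + x^2 * Real.sin θ^2)) := by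
    rw [intervalIntegral.integral_of_le zero_le_one, MeasureTheory.integral_Ioc_eq_integral_Ioo]
    apply setIntegral_congr_fun measurableSet_Ioo
    intro x hx
    have hx2 : Real.sqrt (1-x^2)^2 = 1-x^2 := Real.sq_sqrt (by nlinarith [hx.1, hx.2])
    simp only [ellK', ellK]
    rw [intervalIntegral.integral_of_le (by positivity),
      MeasureTheory.integral_Ioc_eq_integral_Ioo, ← MeasureTheory.integral_const_mul]
    apply setIntegral_congr_fun measurableSet_Ioo
    intro θ _
    dsimp only
    have hsc := Real.sin_sq_add_cos_sq θ
    have e1 : 1 - Real.sqrt (1-x^2)^2 * Real.sin θ^2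
        = Real.cos θ^2 + x^2 * Real.sin θ^2 := by
      rw [hx2]; linear_combination -hsc
    rw [e1, div_mul_div_comm, one_mul]
  -- Step 2 : Fubini A
  have step2 : (∫ x in Ioo (0:ℝ) 1, ∫ θ in Ioo (0:ℝ) (π/2),
          1 / ((1 - t^2*x^2) * Real.sqrt (Real.cos θ^2 + x^2 * Real.sin θ^2)))
      = ∫ θ in Ioo (0:ℝ) (π/2), ∫ x in Ioo (0:ℝ) 1,
          1 / ((1 - t^2*x^2) * Real.sqrt (Real.cos θ^2 + x^2 * Real.sin θ^2)) :=
    MeasureTheory.integral_integral_swap (fubA ht0 ht1)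
  -- Step 3 : inner x-integral equals inner u-integral
  have step3 : (∫ θ in Ioo (0:ℝ) (π/2), ∫ x in Ioo (0:ℝ) 1,
          1 / ((1 - t^2*x^2) * Real.sqrt (Real.cos θ^2 + x^2 * Real.sin θ^2)))
      = ∫ θ in Ioo (0:ℝ) (π/2), ∫ u in Ioo (0:ℝ) 1,
          1 / (1 - u^2 + u^2 * (1-t^2) * Real.cos θ^2) := by
    apply setIntegral_congr_fun measurableSet_Ioo
    intro θ hθ
    dsimp only
    have hc : 0 < Real.cos θ := Real.cos_pos_of_mem_Ioo ⟨by linarith [hθ.1], hθ.2⟩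
    have hs : 0 < Real.sin θ := Real.sin_pos_of_pos_of_lt_pi hθ.1 (by linarith [hθ.2])
    have hsc := Real.sin_sq_add_cos_sq θ
    have hcs : Real.cos θ^2 + Real.sin θ^2 = 1 := by linarith
    set lam : ℝ := Real.sqrt (Real.sin θ^2 + t^2 * Real.cos θ^2) with hlamdef
    have hposl : (0:ℝ) < Real.sin θ^2 + t^2 * Real.cos θ^2 := by positivity
    have hlam2 : lam^2 = Real.sin θ^2 + t^2 * Real.cos θ^2 := Real.sq_sqrt hposl.le
    have hlam0 : 0 < lam := Real.sqrt_pos.2 hposl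
    have hlam1 : lam < 1 := by
      have h2 : lam^2 < 1 := by nlinarith [mul_pos ht4 (mul_pos hc hc)]
      nlinarith [hlam0.le]
    have eL : (∫ x in Ioo (0:ℝ) 1,
        1 / ((1 - t^2*x^2) * Real.sqrt (Real.cos θ^2 + x^2 * Real.sin θ^2)))
        = (1/lam) * atnh lam := by
      rw [← MeasureTheory.integral_Ioc_eq_integral_Ioo,
        ← intervalIntegral.integral_of_le zero_le_one]
      exact ftc1 ht0 ht1 hc hs hcs hlamdef
    have eR : (∫ u in Ioo (0:ℝ) 1, 1 / (1 - u^2 + u^2 * (1-t^2) * Real.cos θ^2))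
        = (1/lam) * atnh lam := by
      rw [← MeasureTheory.integral_Ioc_eq_integral_Ioo,
        ← intervalIntegral.integral_of_le zero_le_one, ← ftc3 hlam0 hlam1]
      apply intervalIntegral.integral_congr
      intro u _
      have h7 : 1 - u^2 + u^2 * (1-t^2) * Real.cos θ^2 = 1 - lam^2*u^2 := by
        linear_combination u^2 * hlam2 + u^2 * hsc
      show 1 / (1 - u^2 + u^2 * (1-t^2) * Real.cos θ^2) = 1 / (1 - lam^2*u^2)
      rw [h7]
    rw [eL, eR]
  -- Step 4 : Fubini B
  have step4 : (∫ θ in Ioo (0:ℝ) (π/2), ∫ u in Ioo (0:ℝ) 1,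
          1 / (1 - u^2 + u^2 * (1-t^2) * Real.cos θ^2))
      = ∫ u in Ioo (0:ℝ) 1, ∫ θ in Ioo (0:ℝ) (π/2),
          1 / (1 - u^2 + u^2 * (1-t^2) * Real.cos θ^2) :=
    MeasureTheory.integral_integral_swap (fubB ht0 ht1)
  -- Step 5 : θ-integral
  have step5 : (∫ u in Ioo (0:ℝ) 1, ∫ θ in Ioo (0:ℝ) (π/2),
          1 / (1 - u^2 + u^2 * (1-t^2) * Real.cos θ^2))
      = ∫ u in Ioo (0:ℝ) 1, π / (2 * Real.sqrt (1-u^2) * Real.sqrt (1-t^2*u^2)) := by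
    apply setIntegral_congr_fun measurableSet_Ioo
    intro u hu
    dsimp only
    have hA : 0 < 1 - u^2 := by nlinarith [hu.1, hu.2]
    have hC : 0 < 1 - t^2*u^2 := by
      have := sqsq_lt_one ht0 ht1 hu.1.le hu.2.le; linarith
    have hAC : 1 - u^2 ≤ 1 - t^2*u^2 := by nlinarith [sq_nonneg u, sq_nonneg t, hu.1.le]
    have key := thetaInt hA hC hAC
    have e2 : ∀ θ : ℝ, 1 - u^2 + u^2 * (1-t^2) * Real.cos θ^2
        = (1-u^2) + ((1-t^2*u^2) - (1-u^2)) * Real.cos θ^2 := by intro θ; ring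
    simp only [e2]
    rw [key, Real.sqrt_mul hA.le]
    ring
  -- Step 6 : sin substitution and conclusion
  have step6 : (∫ u in Ioo (0:ℝ) 1, π / (2 * Real.sqrt (1-u^2) * Real.sqrt (1-t^2*u^2)))
      = (π/2) * ellK t := by
    rw [subst_sin]
    rw [MeasureTheory.integral_const_mul]
    simp only [ellK]
    rw [intervalIntegral.integral_of_le (by positivity),
      MeasureTheory.integral_Ioc_eq_integral_Ioo]
  rw [step1, step2, step3, step4, step5, step6]
end
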